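/- Let X be a complex manifold and ∇ a torsion-free T^{1,0}X-connection on T^{1,0}X. Then the (1,1)-part R^{1,1} of the curvature (∇ + ∂̄)² satisfies R^{1,1}(u, v)w = R^{1,1}(u, w)v for all smooth sections u of T^{0,1}X and v, w of T^{1,0}X. -/
import Mathlib


/-!
STATEMENT 19: Let `X` be a complex manifold and `∇` a torsion-free `T^{1,0}X`-connection
on `T^{1,0}X`. Then the `(1,1)`-part `R^{1,1}` of the curvature `(∇ + ∂̄)²` satisfies
`R^{1,1}(u, v)w = R^{1,1}(u, w)v` for all smooth sections `u` of `T^{0,1}X` and `v, w` of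
`T^{1,0}X`.

We model the complexified tangent bundle of `X` through the `ℂ`-module `W` of smooth
complex vector fields, equipped with the Lie bracket `lie` and the projections
`p10`, `p01` onto the `(1,0)`- and `(0,1)`-parts; integrability of the complex structure
is recorded by involutivity of both distributions. A `T^{1,0}X`-connection `∇` on
`T^{1,0}X` differentiates `(1,0)`-vector fields along `(1,0)`-vector fields; it is
torsion-free if `∇_v w − ∇_w v = [v, w]^{1,0}`. The `(1,1)`-part of the curvature of
`∇ + ∂̄` is `R^{1,1}(u,v)w = [u, ∇_v w]^{1,0} − ∇_v([u,w]^{1,0}) − ∇_{[u,v]^{1,0}} w −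
[[u,v]^{0,1}, w]^{1,0}`.
-/

structure ComplexManifoldConnectionModel where
  /-- the smooth complex vector fields on `X`, i.e. sections of `TX ⊗ ℂ` -/
  W : Type
  [grpW : AddCommGroup W]
  [modW : Module ℂ W]
  /-- the Lie bracket of complex vector fields -/
  lie : W → W → W
  lie_antisymm : ∀ a b, lie a b = - lie b a
  lie_add_left : ∀ a a' b, lie (a + a') b = lie a b + lie a' b
  jacobi : ∀ a b c, lie a (lie b c) + lie b (lie c a) + lie c (lie a b) = 0
  /-- projection onto the `(1,0)`-part -/
  p10 : W →ₗ[ℂ] W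
  /-- projection onto the `(0,1)`-part -/
  p01 : W →ₗ[ℂ] W
  p_sum : ∀ a, p10 a + p01 a = a
  p10_p10 : ∀ a, p10 (p10 a) = p10 a
  p10_p01 : ∀ a, p10 (p01 a) = 0
  /-- `T^{1,0}X` is involutive (integrability of the complex structure) -/
  invol10 : ∀ a b, p10 a = a → p10 b = b → p10 (lie a b) = lie a b
  /-- `T^{0,1}X` is involutive (integrability of the complex structure) -/
  invol01 : ∀ a b, p01 a = a → p01 b = b → p01 (lie a b) = lie a b
  /-- the `T^{1,0}X`-connection `∇` on `T^{1,0}X` (its values on `(1,0)`-inputs are the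
  meaningful ones) -/
  nabla : W → W → W
  /-- `∇` is torsion-free: `∇_v w − ∇_w v = [v, w]^{1,0}` for `(1,0)`-vector fields -/
  torsion_free : ∀ v w, p10 v = v → p10 w = w → nabla v w - nabla w v = p10 (lie v w)

attribute [instance] ComplexManifoldConnectionModel.grpW
  ComplexManifoldConnectionModel.modW

/-- The `(1,1)`-part of the curvature of `∇ + ∂̄`:
`R^{1,1}(u,v)w = [u, ∇_v w]^{1,0} − ∇_v([u,w]^{1,0}) − ∇_{[u,v]^{1,0}} w −
[[u,v]^{0,1}, w]^{1,0}`. -/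
def ComplexManifoldConnectionModel.R11 (S : ComplexManifoldConnectionModel)
    (u v w : S.W) : S.W :=
  S.p10 (S.lie u (S.nabla v w)) - S.nabla v (S.p10 (S.lie u w))
    - S.nabla (S.p10 (S.lie u v)) w - S.p10 (S.lie (S.p01 (S.lie u v)) w)

/-- For a torsion-free `T^{1,0}X`-connection on `T^{1,0}X`, the
`(1,1)`-part of the curvature of `∇ + ∂̄` satisfies `R^{1,1}(u,v)w = R^{1,1}(u,w)v` for
all sections `u` of `T^{0,1}X` and `v, w` of `T^{1,0}X`. -/
theorem r11_symm (S : ComplexManifoldConnectionModel)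
    (u v w : S.W) (hu : S.p01 u = u) (hv : S.p10 v = v) (hw : S.p10 w = w) :
    S.R11 u v w = S.R11 u w v := by
  -- basic additivity lemmas for the bracket
  have lie_zero_left : ∀ a, S.lie 0 a = 0 := by
    intro a
    have h := S.lie_add_left 0 0 a
    simp only [add_zero] at h
    exact (left_eq_add.mp h)
  have lie_neg_left : ∀ a b, S.lie (-a) b = - S.lie a b := by
    intro a b
    have h := S.lie_add_left a (-a) b
    rw [add_neg_cancel, lie_zero_left] at h
    exact eq_neg_of_add_eq_zero_right h.symm
  have lie_sub_left : ∀ a a' b, S.lie (a - a') b = S.lie a b - S.lie a' b := by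
    intro a a' b
    rw [sub_eq_add_neg, S.lie_add_left, lie_neg_left, sub_eq_add_neg]
  have lie_sub_right : ∀ a b b', S.lie a (b - b') = S.lie a b - S.lie a b' := by
    intro a b b'
    rw [S.lie_antisymm a (b - b'), lie_sub_left, S.lie_antisymm b a, S.lie_antisymm b' a]
    abel
  have lie_neg_right : ∀ a b, S.lie a (-b) = - S.lie a b := by
    intro a b
    rw [S.lie_antisymm a (-b), lie_neg_left, S.lie_antisymm b a, neg_neg]
  have hP : ∀ a, S.p10 a = a - S.p01 a := by
    intro a
    rw [eq_sub_iff_add_eq]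
    exact S.p_sum a
  -- torsion-free identities
  have hvw' : S.p10 (S.lie v w) = S.lie v w := S.invol10 v w hv hw
  have t1 : S.nabla v w - S.nabla w v = S.lie v w := by
    rw [S.torsion_free v w hv hw, hvw']
  have t2 : S.nabla (S.p10 (S.lie u w)) v - S.nabla v (S.p10 (S.lie u w))
      = S.p10 (S.lie (S.p10 (S.lie u w)) v) :=
    S.torsion_free _ v (S.p10_p10 _) hv
  have t3 : S.nabla w (S.p10 (S.lie u v)) - S.nabla (S.p10 (S.lie u v)) w
      = S.p10 (S.lie w (S.p10 (S.lie u v))) :=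
    S.torsion_free w _ hw (S.p10_p10 _)
  -- the three key computations
  have h1 : S.p10 (S.lie u (S.nabla v w)) - S.p10 (S.lie u (S.nabla w v))
      = S.p10 (S.lie u (S.lie v w)) := by
    rw [← map_sub, ← lie_sub_right, t1]
  have h2 : S.nabla w (S.p10 (S.lie u v)) - S.nabla (S.p10 (S.lie u v)) w
      = S.p10 (S.lie w (S.lie u v)) + S.p10 (S.lie (S.p01 (S.lie u v)) w) := by
    rw [t3, hP (S.lie u v), lie_sub_right, map_sub,
      S.lie_antisymm w (S.p01 (S.lie u v)), map_neg, sub_neg_eq_add]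
  have h3 : S.nabla (S.p10 (S.lie u w)) v - S.nabla v (S.p10 (S.lie u w))
      = S.p10 (S.lie v (S.lie w u)) - S.p10 (S.lie (S.p01 (S.lie u w)) v) := by
    have he : S.lie (S.lie u w) v = S.lie v (S.lie w u) := by
      rw [S.lie_antisymm (S.lie u w) v, S.lie_antisymm w u, lie_neg_right]
    rw [t2, hP (S.lie u w), lie_sub_left, map_sub, he]
  -- Jacobi identity, projected
  have h4 : S.p10 (S.lie u (S.lie v w)) + S.p10 (S.lie v (S.lie w u))
      + S.p10 (S.lie w (S.lie u v)) = 0 := by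
    rw [← map_add, ← map_add, S.jacobi u v w, map_zero]
  have key : S.R11 u v w - S.R11 u w v = 0 := by
    calc S.R11 u v w - S.R11 u w v
        = (S.p10 (S.lie u (S.nabla v w)) - S.p10 (S.lie u (S.nabla w v)))
          + (S.nabla w (S.p10 (S.lie u v)) - S.nabla (S.p10 (S.lie u v)) w)
          + (S.nabla (S.p10 (S.lie u w)) v - S.nabla v (S.p10 (S.lie u w)))
          + (S.p10 (S.lie (S.p01 (S.lie u w)) v) - S.p10 (S.lie (S.p01 (S.lie u v)) w)) := by
          simp only [ComplexManifoldConnectionModel.R11]; abel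
      _ = S.p10 (S.lie u (S.lie v w))
          + (S.p10 (S.lie w (S.lie u v)) + S.p10 (S.lie (S.p01 (S.lie u v)) w))
          + (S.p10 (S.lie v (S.lie w u)) - S.p10 (S.lie (S.p01 (S.lie u w)) v))
          + (S.p10 (S.lie (S.p01 (S.lie u w)) v) - S.p10 (S.lie (S.p01 (S.lie u v)) w)) := by
          rw [h1, h2, h3]
      _ = S.p10 (S.lie u (S.lie v w)) + S.p10 (S.lie v (S.lie w u))
          + S.p10 (S.lie w (S.lie u v)) := by abel
      _ = 0 := h4
  exact sub_eq_zero.mp key
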